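/- arXiv:2103.09999 — 4 statements merged into one kernel-verified Lean document; each statement's English description precedes it below -/
import Mathlib

section
/- (Faithfulness) For any n-qubit unitary U, s(U) ≤ 4^n (so v(U) ≥ 0), and s(U) = 4^n (i.e., v(U) = 0) if and only if U is a Clifford unitary. -/
open Matrix Complex
open scoped Matrix ComplexConjugate Pointwise

noncomputable section

/-- `n`-qubit operators: matrices indexed by computational basis strings. -/
abbrev QOp (n : ℕ) := Matrix (Fin n → Fin 2) (Fin n → Fin 2) ℂ

/-- `n`-qubit state vectors. -/
abbrev QVec (n : ℕ) := (Fin n → Fin 2) → ℂ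

/-- Labels of the quotient Pauli group: one pair of bits `(a,b)` (meaning `X^a Z^b`
up to phase, i.e. `I, X, Y, Z`) per qubit.  This is the standard symplectic
encoding of the strings `{0,1,2,3}^n`, with the additive (Klein) group structure
being exactly multiplication in the Pauli group modulo phases. -/
abbrev PauliLabel (n : ℕ) := Fin n → ZMod 2 × ZMod 2

def pauliX : Matrix (Fin 2) (Fin 2) ℂ := !![0,1;1,0]
def pauliY : Matrix (Fin 2) (Fin 2) ℂ := !![0,-Complex.I;Complex.I,0]
def pauliZ : Matrix (Fin 2) (Fin 2) ℂ := !![1,0;0,-1]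

/-- The single-qubit Pauli matrix with label `(a,b)`: `I, X, Y, Z`. -/
def pauli1 (ab : ZMod 2 × ZMod 2) : Matrix (Fin 2) (Fin 2) ℂ :=
  if ab = (0,0) then 1 else if ab = (1,0) then pauliX
  else if ab = (1,1) then pauliY else pauliZ

/-- The Pauli string `σ_u = σ_{u_1} ⊗ ⋯ ⊗ σ_{u_n}`. -/
def pauliStr {n : ℕ} (u : PauliLabel n) : QOp n :=
  Matrix.of fun x y => ∏ k, pauli1 (u k) (x k) (y k)

/-- The unitary Pauli function `P_U(u|v) = tr(σ_u U σ_v U†)/2^n`. -/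
def PauliFun {n : ℕ} (U : QOp n) (u v : PauliLabel n) : ℂ :=
  (pauliStr u * U * pauliStr v * Uᴴ).trace / 2 ^ n

/-- `s(U)`: the number of pairs `(u,v)` with `P_U(u|v) = ±1`. -/
def sU {n : ℕ} (U : QOp n) : ℕ :=
  Set.ncard {p : PauliLabel n × PauliLabel n |
    PauliFun U p.1 p.2 = 1 ∨ PauliFun U p.1 p.2 = -1}

/-- The unitary stabilizer nullity `v(U) = 2n − log₂ s(U)`. -/
def nullity {n : ℕ} (U : QOp n) : ℝ := 2 * n - Real.logb 2 (sU U)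

/-- The state Pauli function `P_{|ψ⟩}(u) = ⟨ψ|σ_u|ψ⟩`. -/
def statePauliFun {n : ℕ} (ψ : QVec n) (u : PauliLabel n) : ℂ :=
  star ψ ⬝ᵥ (pauliStr u).mulVec ψ

/-- `s(|ψ⟩)`: number of labels `u` with `⟨ψ|σ_u|ψ⟩ = ±1`. -/
def sState {n : ℕ} (ψ : QVec n) : ℕ :=
  Set.ncard {u : PauliLabel n | statePauliFun ψ u = 1 ∨ statePauliFun ψ u = -1}

/-- The state stabilizer nullity `v_s(|ψ⟩) = n − log₂ s(|ψ⟩)`. -/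
def stateNullity {n : ℕ} (ψ : QVec n) : ℝ := n - Real.logb 2 (sState ψ)

/-- The `n`-qubit Pauli group with phases `±1, ±i`, as a set of matrices. -/
def fullPauliGroup (n : ℕ) : Set (QOp n) :=
  {P | ∃ (c : ℂ) (u : PauliLabel n),
    (c = 1 ∨ c = -1 ∨ c = Complex.I ∨ c = -Complex.I) ∧ P = c • pauliStr u}

/-- A Clifford unitary: a unitary with `U P̂_n U† = P̂_n`. -/
def IsClifford {n : ℕ} (U : QOp n) : Prop :=
  U ∈ Matrix.unitaryGroup (Fin n → Fin 2) ℂ ∧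
    (fun P => U * P * Uᴴ) '' fullPauliGroup n = fullPauliGroup n

/-- The subgroup (as a set of labels) associated with `U`:
`P_U = (U P_n U†) ∩ P_n` modulo phases. -/
def PsubU {n : ℕ} (U : QOp n) : Set (PauliLabel n) :=
  {u | ∃ (v : PauliLabel n) (c : ℂ),
    (c = 1 ∨ c = -1 ∨ c = Complex.I ∨ c = -Complex.I) ∧
      U * pauliStr v * Uᴴ = c • pauliStr u}

/-- Tensor product of an `n`-qubit and an `m`-qubit operator. -/
def tensorOp {n m : ℕ} (U : QOp n) (V : QOp m) : QOp (n + m) :=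
  Matrix.of fun x y =>
    U (fun i => x (Fin.castAdd m i)) (fun i => y (Fin.castAdd m i)) *
    V (fun j => x (Fin.natAdd n j)) (fun j => y (Fin.natAdd n j))

/-- The first `n` symbols of a label on `n+m` qubits. -/
def fstLab {n m : ℕ} (u : PauliLabel (n + m)) : PauliLabel n :=
  fun i => u (Fin.castAdd m i)

/-- The last `m` symbols of a label on `n+m` qubits. -/
def sndLab {n m : ℕ} (u : PauliLabel (n + m)) : PauliLabel m :=
  fun j => u (Fin.natAdd n j)

/-- The T gate acting on qubit `q` (tensored with identity elsewhere). -/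
def TgateOn (n : ℕ) (q : Fin n) : QOp n :=
  Matrix.of fun x y =>
    if x = y then (if x q = 0 then 1 else Complex.exp (Complex.I * (Real.pi / 4))) else 0

/-- The single-qubit T gate `diag(1, e^{iπ/4})`. -/
def Tgate : QOp 1 := TgateOn 1 0

/-- The `n`-fold tensor power of the Hadamard gate. -/
def HadN (n : ℕ) : QOp n :=
  Matrix.of fun x y =>
    ∏ k, ((1 / (Real.sqrt 2) : ℂ) * (if x k = 1 ∧ y k = 1 then -1 else 1))

/-- The multi-controlled Z gate `C^{n-1}Z`. -/
def CnZ (n : ℕ) : QOp n :=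
  Matrix.of fun x y => if x = y then (if ∀ k, x k = 1 then -1 else 1) else 0

/-- The computational basis state `|0⟩^{⊗n}`. -/
def ket0 (n : ℕ) : QVec n := fun x => if x = fun _ => (0 : Fin 2) then 1 else 0

/-- The state `|+⟩^{⊗n}`. -/
def ketPlus (n : ℕ) : QVec n := fun _ => (1 / (Real.sqrt 2 : ℂ)) ^ n

/-- The `2n`-qubit maximally entangled state `2^{-n/2} ∑_x |x⟩|x⟩`. -/
def maxEnt (n : ℕ) : QVec (n + n) := fun x =>
  if (fun i => x (Fin.castAdd n i)) = (fun j => x (Fin.natAdd n j))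
  then (1 / (Real.sqrt 2 : ℂ)) ^ n else 0

end


noncomputable section AuxFaithfulness

lemma pauli1_cases (ab : ZMod 2 × ZMod 2) : ab = (0,0) ∨ ab = (1,0) ∨ ab = (1,1) ∨ ab = (0,1) := by
  revert ab; decide

lemma pauli1_00 : pauli1 (0,0) = 1 := by rw [pauli1, if_pos rfl]
lemma pauli1_10 : pauli1 (1,0) = pauliX := by
  rw [pauli1, if_neg (by decide), if_pos rfl]
lemma pauli1_11 : pauli1 (1,1) = pauliY := by
  rw [pauli1, if_neg (by decide), if_neg (by decide), if_pos rfl]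
lemma pauli1_01 : pauli1 (0,1) = pauliZ := by
  rw [pauli1, if_neg (by decide), if_neg (by decide), if_neg (by decide)]

lemma pauli1_conjTranspose (ab : ZMod 2 × ZMod 2) : (pauli1 ab)ᴴ = pauli1 ab := by
  rcases pauli1_cases ab with h|h|h|h <;> subst h <;>
    simp only [pauli1_00, pauli1_10, pauli1_11, pauli1_01, pauliX, pauliY, pauliZ] <;>
    ext i j <;> fin_cases i <;> fin_cases j <;>
    simp [Matrix.conjTranspose_apply]

lemma pauli1_mul_self (ab : ZMod 2 × ZMod 2) : pauli1 ab * pauli1 ab = 1 := by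
  rcases pauli1_cases ab with h|h|h|h <;> subst h <;>
    simp only [pauli1_00, pauli1_10, pauli1_11, pauli1_01, pauliX, pauliY, pauliZ,
      Matrix.mul_fin_two, Matrix.one_fin_two, Matrix.mul_one] <;>
    norm_num [Complex.I_mul_I]

lemma pauli1_trace_mul (a b : ZMod 2 × ZMod 2) :
    (pauli1 a * pauli1 b).trace = if a = b then 2 else 0 := by
  rcases pauli1_cases a with h|h|h|h <;> rcases pauli1_cases b with h'|h'|h'|h' <;> subst h h' <;>
    simp only [pauli1_00, pauli1_10, pauli1_11, pauli1_01, pauliX, pauliY, pauliZ,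
      Matrix.mul_fin_two, Matrix.one_fin_two, Matrix.mul_one, Matrix.one_mul] <;>
    rw [show ∀ a b c d : ℂ, (!![a,b;c,d]).trace = a + d from
      fun _ _ _ _ => Matrix.trace_fin_two_of _ _ _ _] <;>
    norm_num [Complex.I_mul_I, Prod.ext_iff, if_pos, if_neg]

def kron {n : ℕ} (A : Fin n → Matrix (Fin 2) (Fin 2) ℂ) : QOp n :=
  Matrix.of fun x y => ∏ k, A k (x k) (y k)

lemma kron_mul {n : ℕ} (A B : Fin n → Matrix (Fin 2) (Fin 2) ℂ) :
    kron A * kron B = kron (fun k => A k * B k) := by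
  ext x y
  simp only [kron, Matrix.mul_apply, Matrix.of_apply, ← Finset.prod_mul_distrib]
  rw [Fintype.prod_sum]

lemma kron_conjTranspose {n : ℕ} (A : Fin n → Matrix (Fin 2) (Fin 2) ℂ) :
    (kron A)ᴴ = kron (fun k => (A k)ᴴ) := by
  ext x y
  simp [kron, Matrix.conjTranspose_apply, map_prod]

lemma kron_one {n : ℕ} : kron (fun _ : Fin n => (1 : Matrix (Fin 2) (Fin 2) ℂ)) = 1 := by
  ext x y
  simp only [kron, Matrix.of_apply, Matrix.one_apply, Fintype.prod_boole]
  simp [funext_iff]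

lemma trace_kron {n : ℕ} (A : Fin n → Matrix (Fin 2) (Fin 2) ℂ) :
    (kron A).trace = ∏ k, (A k).trace := by
  simp only [Matrix.trace, Matrix.diag, kron, Matrix.of_apply, Fintype.prod_sum]

lemma eq_zero_of_trace_conjT_mul {m : Type*} [Fintype m] [DecidableEq m] (A : Matrix m m ℂ)
    (h : (Aᴴ * A).trace = 0) : A = 0 := by
  have key : ∑ x, ∑ y, ((Complex.normSq (A y x) : ℝ) : ℂ) = 0 := by
    rw [← h]
    simp [Matrix.trace, Matrix.diag, Matrix.mul_apply, Matrix.conjTranspose_apply,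
      Complex.normSq_eq_conj_mul_self, Complex.star_def]
  have key2 : ∑ x : m, ∑ y : m, Complex.normSq (A y x) = 0 := by exact_mod_cast key
  ext i j
  have h1 := (Finset.sum_eq_zero_iff_of_nonneg
    (fun x _ => Finset.sum_nonneg fun y _ => Complex.normSq_nonneg _)).mp key2 j (Finset.mem_univ _)
  have h2 := (Finset.sum_eq_zero_iff_of_nonneg
    (fun y _ => Complex.normSq_nonneg _)).mp h1 i (Finset.mem_univ _)
  simpa using Complex.normSq_eq_zero.mp h2

lemma card_basis (n : ℕ) : Fintype.card (Fin n → Fin 2) = 2 ^ n := by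
  simp [Fintype.card_fun]

lemma trace_one_qop (n : ℕ) : (1 : QOp n).trace = 2 ^ n := by
  rw [Matrix.trace_one, card_basis]; push_cast; ring

lemma pauliStr_eq_kron {n : ℕ} (u : PauliLabel n) : pauliStr u = kron (fun k => pauli1 (u k)) := rfl

lemma pauliStr_conjTranspose {n : ℕ} (u : PauliLabel n) : (pauliStr u)ᴴ = pauliStr u := by
  rw [pauliStr_eq_kron, kron_conjTranspose]
  simp_rw [pauli1_conjTranspose]

lemma pauliStr_mul_self {n : ℕ} (u : PauliLabel n) : pauliStr u * pauliStr u = 1 := by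
  rw [pauliStr_eq_kron, kron_mul]
  simp_rw [pauli1_mul_self]
  exact kron_one

lemma trace_pauliStr_mul {n : ℕ} (u v : PauliLabel n) :
    (pauliStr u * pauliStr v).trace = if u = v then 2 ^ n else 0 := by
  rw [pauliStr_eq_kron, pauliStr_eq_kron, kron_mul, trace_kron]
  simp_rw [pauli1_trace_mul]
  by_cases h : u = v
  · subst h; simp
  · rw [if_neg h]
    obtain ⟨k, hk⟩ := Function.ne_iff.mp h
    exact Finset.prod_eq_zero (Finset.mem_univ k) (if_neg hk)

lemma pauliStr_zero {n : ℕ} : pauliStr (fun _ : Fin n => ((0,0) : ZMod 2 × ZMod 2)) = 1 := by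
  rw [pauliStr_eq_kron]
  simp_rw [pauli1_00]
  exact kron_one

lemma two_pow_ne_zero' (n : ℕ) : ((2:ℂ) ^ n) ≠ 0 := pow_ne_zero _ two_ne_zero

lemma smul_pauliStr_inj {n : ℕ} {c d : ℂ} {u w : PauliLabel n} (hc : c ≠ 0)
    (h : c • pauliStr u = d • pauliStr w) : u = w ∧ c = d := by
  have h1 := congrArg (fun M => (pauliStr u * M).trace) h
  simp only [Matrix.mul_smul, Matrix.trace_smul, trace_pauliStr_mul, smul_eq_mul,
    if_true, eq_self_iff_true] at h1
  by_cases huw : u = w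
  · subst huw
    simp only [if_true, eq_self_iff_true] at h1
    exact ⟨rfl, mul_right_cancel₀ (two_pow_ne_zero' n) h1⟩
  · rw [if_neg huw, mul_zero] at h1
    rcases mul_eq_zero.mp h1 with h2 | h2
    · exact absurd h2 hc
    · exact absurd h2 (two_pow_ne_zero' n)

lemma phase_mul {c d : ℂ} (hc : c = 1 ∨ c = -1 ∨ c = Complex.I ∨ c = -Complex.I)
    (hd : d = 1 ∨ d = -1 ∨ d = Complex.I ∨ d = -Complex.I) :
    c * d = 1 ∨ c * d = -1 ∨ c * d = Complex.I ∨ c * d = -Complex.I := by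
  rcases hc with h|h|h|h <;> rcases hd with h'|h'|h'|h' <;> subst h h' <;>
    simp [Complex.I_mul_I] <;> norm_num [Complex.I_mul_I] <;>
    rw [show -Complex.I * -Complex.I = Complex.I * Complex.I by ring, Complex.I_mul_I] <;> norm_num

lemma phase_ne_zero' {c : ℂ} (hc : c = 1 ∨ c = -1 ∨ c = Complex.I ∨ c = -Complex.I) : c ≠ 0 := by
  rcases hc with h|h|h|h <;> subst h <;> simp [Complex.I_ne_zero]

lemma pauliFun_eq_of_conj {n : ℕ} {U : QOp n} {u v : PauliLabel n} {c : ℂ}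
    (h : U * pauliStr v * Uᴴ = c • pauliStr u) : PauliFun U u v = c := by
  have hassoc : pauliStr u * U * pauliStr v * Uᴴ = pauliStr u * (U * pauliStr v * Uᴴ) := by
    simp only [Matrix.mul_assoc]
  rw [PauliFun, hassoc, h, Matrix.mul_smul, pauliStr_mul_self, Matrix.trace_smul, trace_one_qop,
    smul_eq_mul, mul_div_assoc, div_self (two_pow_ne_zero' n), mul_one]

lemma pauliFun_pm_iff {n : ℕ} {U : QOp n} (hU : U ∈ Matrix.unitaryGroup (Fin n → Fin 2) ℂ)
    {u v : PauliLabel n} {ε : ℂ} (hε : ε = 1 ∨ ε = -1) :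
    PauliFun U u v = ε ↔ U * pauliStr v * Uᴴ = ε • pauliStr u := by
  have hUU : U * Uᴴ = 1 := by
    rw [← Matrix.star_eq_conjTranspose]; exact Matrix.mem_unitaryGroup_iff.mp hU
  have hU'U : Uᴴ * U = 1 := by
    rw [← Matrix.star_eq_conjTranspose]; exact Matrix.mem_unitaryGroup_iff'.mp hU
  constructor
  · intro hP
    set B := U * pauliStr v * Uᴴ with hB
    have hBH : Bᴴ = B := by
      simp only [hB, Matrix.conjTranspose_mul, Matrix.conjTranspose_conjTranspose,
        pauliStr_conjTranspose, Matrix.mul_assoc]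
    have hBB : B * B = 1 := by
      rw [hB]
      calc (U * pauliStr v * Uᴴ) * (U * pauliStr v * Uᴴ)
          = U * (pauliStr v * ((Uᴴ * U) * (pauliStr v * Uᴴ))) := by simp only [Matrix.mul_assoc]
        _ = U * (pauliStr v * (pauliStr v * Uᴴ)) := by rw [hU'U, Matrix.one_mul]
        _ = U * Uᴴ := by rw [← Matrix.mul_assoc (pauliStr v), pauliStr_mul_self, Matrix.one_mul]
        _ = 1 := hUU
    have htr1 : (pauliStr u * B).trace = ε * 2 ^ n := by
      have h0 : (pauliStr u * U * pauliStr v * Uᴴ).trace = ε * 2 ^ n := by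
        rw [PauliFun, div_eq_iff (two_pow_ne_zero' n)] at hP
        exact hP
      calc (pauliStr u * B).trace = (pauliStr u * U * pauliStr v * Uᴴ).trace := by
            rw [hB]; simp only [Matrix.mul_assoc]
        _ = ε * 2 ^ n := h0
    have htr2 : (B * pauliStr u).trace = ε * 2 ^ n := by
      rw [Matrix.trace_mul_comm]; exact htr1
    have hsε : star ε = ε := by rcases hε with h|h <;> subst h <;> simp
    have hDH : (B - ε • pauliStr u)ᴴ = B - ε • pauliStr u := by
      rw [Matrix.conjTranspose_sub, Matrix.conjTranspose_smul, hBH, pauliStr_conjTranspose, hsε]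
    have htrD : ((B - ε • pauliStr u)ᴴ * (B - ε • pauliStr u)).trace = 0 := by
      rw [hDH]
      simp only [Matrix.sub_mul, Matrix.mul_sub, Matrix.smul_mul, Matrix.mul_smul,
        Matrix.trace_sub, Matrix.trace_smul, smul_smul, hBB, pauliStr_mul_self,
        trace_one_qop, htr1, htr2, smul_eq_mul]
      rcases hε with h|h <;> subst h <;> ring
    have hD := eq_zero_of_trace_conjT_mul _ htrD
    rw [hB] at hD ⊢
    exact sub_eq_zero.mp hD
  · intro h
    exact pauliFun_eq_of_conj h

end AuxFaithfulness

theorem faithfulness {n : ℕ} (U : QOp n)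
    (hU : U ∈ Matrix.unitaryGroup (Fin n → Fin 2) ℂ) :
    sU U ≤ 4 ^ n ∧ 0 ≤ nullity U ∧
      (sU U = 4 ^ n ↔ IsClifford U) ∧ (nullity U = 0 ↔ IsClifford U) := by
    classical
  have hUU : U * Uᴴ = 1 := by
    rw [← Matrix.star_eq_conjTranspose]; exact Matrix.mem_unitaryGroup_iff.mp hU
  have hU'U : Uᴴ * U = 1 := by
    rw [← Matrix.star_eq_conjTranspose]; exact Matrix.mem_unitaryGroup_iff'.mp hU
  set S := {p : PauliLabel n × PauliLabel n |
    PauliFun U p.1 p.2 = 1 ∨ PauliFun U p.1 p.2 = -1} with hSdef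
  have hmem : ∀ p : PauliLabel n × PauliLabel n,
      p ∈ S ↔ ∃ ε : ℂ, (ε = 1 ∨ ε = -1) ∧ U * pauliStr p.2 * Uᴴ = ε • pauliStr p.1 := by
    intro p
    simp only [hSdef, Set.mem_setOf_eq]
    constructor
    · rintro (h | h)
      · exact ⟨1, Or.inl rfl, (pauliFun_pm_iff hU (Or.inl rfl)).mp h⟩
      · exact ⟨-1, Or.inr rfl, (pauliFun_pm_iff hU (Or.inr rfl)).mp h⟩
    · rintro ⟨ε, hε, hc⟩
      rcases hε with h | h <;> subst h
      · exact Or.inl ((pauliFun_pm_iff hU (Or.inl rfl)).mpr hc)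
      · exact Or.inr ((pauliFun_pm_iff hU (Or.inr rfl)).mpr hc)
  have hSU : sU U = S.ncard := rfl
  have hcard : (Set.univ : Set (PauliLabel n)).ncard = 4 ^ n := by
    rw [Set.ncard_univ, Nat.card_eq_fintype_card]
    simp [Fintype.card_fun]
  have hinj : Set.InjOn Prod.snd S := by
    rintro ⟨u1, v1⟩ h1 ⟨u2, v2⟩ h2 h
    obtain rfl : v1 = v2 := h
    obtain ⟨ε1, hε1, hc1⟩ := (hmem _).mp h1
    obtain ⟨ε2, hε2, hc2⟩ := (hmem _).mp h2
    have hne : ε1 ≠ 0 := by rcases hε1 with h | h <;> rw [h] <;> norm_num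
    obtain ⟨hu, -⟩ := smul_pauliStr_inj hne (hc1.symm.trans hc2)
    exact Prod.ext_iff.mpr ⟨hu, rfl⟩
  have hle : sU U ≤ 4 ^ n := by
    rw [hSU, ← hcard]
    exact Set.ncard_le_ncard_of_injOn Prod.snd (fun a _ => Set.mem_univ _) hinj Set.finite_univ
  have cancel : ∀ A B : QOp n, U * A * Uᴴ = U * B * Uᴴ → A = B := by
    have key : ∀ A : QOp n, Uᴴ * (U * A * Uᴴ) * U = A := by
      intro A
      calc Uᴴ * (U * A * Uᴴ) * U = (Uᴴ * U) * A * (Uᴴ * U) := by simp only [Matrix.mul_assoc]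
        _ = A := by rw [hU'U, Matrix.one_mul, Matrix.mul_one]
    intro A B h
    rw [← key A, h, key B]
  have clifford_to_surj : IsClifford U → ∀ v : PauliLabel n, ∃ u : PauliLabel n, ∃ ε : ℂ,
      (ε = 1 ∨ ε = -1) ∧ U * pauliStr v * Uᴴ = ε • pauliStr u := by
    rintro ⟨-, himg⟩ v
    have hv : pauliStr v ∈ fullPauliGroup n := ⟨1, v, Or.inl rfl, (one_smul _ _).symm⟩
    have hmem2 : U * pauliStr v * Uᴴ ∈ fullPauliGroup n := by
      rw [← himg]; exact ⟨pauliStr v, hv, rfl⟩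
    obtain ⟨c, u, hph, hc⟩ := hmem2
    have hherm : (U * pauliStr v * Uᴴ)ᴴ = U * pauliStr v * Uᴴ := by
      simp only [Matrix.conjTranspose_mul, Matrix.conjTranspose_conjTranspose,
        pauliStr_conjTranspose, Matrix.mul_assoc]
    have h2 : (star c) • pauliStr u = c • pauliStr u := by
      have h3 := congrArg Matrix.conjTranspose hc
      rw [hherm, hc, Matrix.conjTranspose_smul, pauliStr_conjTranspose] at h3
      exact h3.symm
    have hcc : star c = c :=
      (smul_pauliStr_inj (star_ne_zero.mpr (phase_ne_zero' hph)) h2).2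
    have hpm : c = 1 ∨ c = -1 := by
      rcases hph with h | h | h | h
      · exact Or.inl h
      · exact Or.inr h
      · exfalso
        rw [h, Complex.star_def, Complex.conj_I] at hcc
        exact Complex.I_ne_zero (by linear_combination -hcc / 2)
      · exfalso
        rw [h, Complex.star_def, map_neg, Complex.conj_I, neg_neg] at hcc
        exact Complex.I_ne_zero (by linear_combination hcc / 2)
    exact ⟨u, c, hpm, hc⟩
  have clifford_to_card : IsClifford U → sU U = 4 ^ n := by
    intro hC
    choose g ε hgpm hgc using clifford_to_surj hC
    have hge : 4 ^ n ≤ sU U := by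
      rw [hSU, ← hcard]
      refine Set.ncard_le_ncard_of_injOn (fun v => (g v, v)) ?_ ?_ (Set.toFinite S)
      · intro v _
        exact (hmem (g v, v)).mpr ⟨ε v, hgpm v, hgc v⟩
      · intro a _ b _ h
        exact congrArg Prod.snd h
    exact le_antisymm hle hge
  have card_to_clifford : sU U = 4 ^ n → IsClifford U := by
    intro hEq
    have himgS : Prod.snd '' S = Set.univ := by
      refine Set.eq_of_subset_of_ncard_le (Set.subset_univ _) ?_ Set.finite_univ
      rw [hcard, Set.ncard_image_of_injOn hinj, ← hSU, hEq]
    have hsurj : ∀ v : PauliLabel n, ∃ u : PauliLabel n, ∃ ε : ℂ,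
        (ε = 1 ∨ ε = -1) ∧ U * pauliStr v * Uᴴ = ε • pauliStr u := by
      intro v
      have hv : v ∈ Prod.snd '' S := himgS ▸ Set.mem_univ v
      obtain ⟨⟨u, v'⟩, hp, h⟩ := hv
      obtain rfl : v' = v := h
      obtain ⟨ε, hε, hc⟩ := (hmem _).mp hp
      exact ⟨u, ε, hε, hc⟩
    choose f ε hfpm hfc using hsurj
    have hεsq : ∀ v, ε v * ε v = 1 := by
      intro v; rcases hfpm v with h | h <;> rw [h] <;> ring
    have hεne : ∀ v, ε v ≠ 0 := by
      intro v; rcases hfpm v with h | h <;> rw [h] <;> norm_num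
    have hfinj : Function.Injective f := by
      intro v1 v2 h
      have e1 := hfc v1
      have e2 := hfc v2
      rw [h] at e1
      have h5 : U * (ε v2 • pauliStr v1) * Uᴴ = U * (ε v1 • pauliStr v2) * Uᴴ := by
        rw [Matrix.mul_smul, Matrix.smul_mul, Matrix.mul_smul, Matrix.smul_mul, e1, e2,
          smul_smul, smul_smul, mul_comm]
      exact (smul_pauliStr_inj (hεne v2) (cancel _ _ h5)).1
    have hfsurj : Function.Surjective f := Finite.surjective_of_injective hfinj
    refine ⟨hU, ?_⟩
    ext Q
    constructor
    · rintro ⟨P, ⟨c, w, hph, rfl⟩, rfl⟩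
      refine ⟨c * ε w, f w, phase_mul hph ((hfpm w).imp id Or.inl), ?_⟩
      show U * (c • pauliStr w) * Uᴴ = (c * ε w) • pauliStr (f w)
      rw [Matrix.mul_smul, Matrix.smul_mul, hfc w, smul_smul]
    · rintro ⟨c, u, hph, rfl⟩
      obtain ⟨v, rfl⟩ := hfsurj u
      refine ⟨(c * ε v) • pauliStr v, ⟨c * ε v, v, phase_mul hph ((hfpm v).imp id Or.inl), rfl⟩, ?_⟩
      show U * ((c * ε v) • pauliStr v) * Uᴴ = c • pauliStr (f v)
      rw [Matrix.mul_smul, Matrix.smul_mul, hfc v, smul_smul, mul_assoc, hεsq v, mul_one]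
  have hzero : ((fun _ => ((0,0) : ZMod 2 × ZMod 2), fun _ => ((0,0) : ZMod 2 × ZMod 2)) :
      PauliLabel n × PauliLabel n) ∈ S := by
    refine (hmem _).mpr ⟨1, Or.inl rfl, ?_⟩
    show U * pauliStr (fun _ => ((0,0) : ZMod 2 × ZMod 2)) * Uᴴ
      = (1:ℂ) • pauliStr (fun _ => ((0,0) : ZMod 2 × ZMod 2))
    rw [pauliStr_zero, Matrix.mul_one, one_smul]
    exact hUU
  have hpos : 1 ≤ sU U := by
    rw [hSU]
    exact (Set.ncard_pos (Set.toFinite S)).mpr ⟨_, hzero⟩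
  have hsUR : (0:ℝ) < (sU U : ℝ) := by exact_mod_cast hpos
  have hlog4 : Real.logb 2 ((4:ℝ) ^ n) = 2 * n := by
    rw [show (4:ℝ) = 2 ^ (2:ℕ) by norm_num, ← pow_mul, Real.logb_pow,
      Real.logb_self_eq_one one_lt_two]
    push_cast; ring
  have hlogle : Real.logb 2 (sU U) ≤ 2 * n := by
    rw [← hlog4]
    exact Real.logb_le_logb_of_le one_lt_two hsUR (by exact_mod_cast hle)
  have hnn : 0 ≤ nullity U := by rw [nullity]; push_cast; linarith
  have hiff1 : sU U = 4 ^ n ↔ IsClifford U := ⟨card_to_clifford, clifford_to_card⟩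
  have hiff2 : nullity U = 0 ↔ IsClifford U := by
    rw [← hiff1, nullity]
    constructor
    · intro h
      have hlogeq : Real.logb 2 (sU U) = Real.logb 2 ((4:ℝ) ^ n) := by
        rw [hlog4]; push_cast at h ⊢; linarith
      have h4 := Real.logb_injOn_pos one_lt_two (Set.mem_Ioi.mpr hsUR)
        (Set.mem_Ioi.mpr (by positivity : (0:ℝ) < (4:ℝ) ^ n)) hlogeq
      exact_mod_cast h4
    · intro h
      rw [h]
      push_cast
      rw [hlog4]
      ring
  exact ⟨hle, hnn, hiff1, hiff2⟩
end

section
/- For any diagonal n-qubit unitary U and any Pauli string u, the inner product ⟨+|^{⊗n} U† σ_u U |+⟩^{⊗n} equals ±1 if and only if U† σ_u U ∈ ±{I,X}^{⊗n}. -/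
open Matrix Complex
open scoped Matrix ComplexConjugate Pointwise

noncomputable section AuxDiag

def xor2 (i : Fin 2) (a : ZMod 2) : Fin 2 := if a = 0 then i else i + 1

def mu1 (ab : ZMod 2 × ZMod 2) (j : Fin 2) : ℂ :=
  (if ab = (1,1) then Complex.I else 1) * (if ab.2 = 1 ∧ j = 1 then (-1) else 1)

lemma pauli1_eq (ab : ZMod 2 × ZMod 2) (i j : Fin 2) :
    pauli1 ab i j = if j = xor2 i ab.1 then mu1 ab j else 0 := by
  obtain ⟨a, b⟩ := ab
  have h2 : ∀ c : ZMod 2, c = 0 ∨ c = 1 := by decide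
  rcases h2 a with ha | ha <;> rcases h2 b with hb | hb <;> subst ha <;> subst hb <;>
    fin_cases i <;> fin_cases j <;>
    simp +decide [pauli1, pauliX, pauliY, pauliZ, mu1, xor2, Matrix.one_apply, Prod.ext_iff]

lemma mu1_abs (ab : ZMod 2 × ZMod 2) (j : Fin 2) : ‖mu1 ab j‖ = 1 := by
  unfold mu1; split <;> split <;> simp

lemma mu1_X (a : ZMod 2) (j : Fin 2) : mu1 (a, 0) j = 1 := by
  unfold mu1
  have h : (a, (0:ZMod 2)) ≠ (1,1) := by
    intro h; rw [Prod.mk.injEq] at h; exact absurd h.2 (by decide)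
  simp [h]

/-- flip a bit string by the X-part of a label -/
def flipa {n : ℕ} (a : Fin n → ZMod 2) (x : Fin n → Fin 2) : Fin n → Fin 2 :=
  fun k => xor2 (x k) (a k)

lemma pauliStr_eq {n : ℕ} (u : PauliLabel n) (x y : Fin n → Fin 2) :
    pauliStr u x y =
      if y = flipa (fun k => (u k).1) x then ∏ k, mu1 (u k) (y k) else 0 := by
  have hs : pauliStr u x y = ∏ k, pauli1 (u k) (x k) (y k) := rfl
  rw [hs]
  by_cases h : y = flipa (fun k => (u k).1) x
  · have hk : ∀ k, y k = xor2 (x k) (u k).1 := fun k => congrFun h k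
    rw [if_pos h]
    refine Finset.prod_congr rfl fun k _ => ?_
    rw [pauli1_eq, if_pos (hk k)]
  · simp only [h, if_false]
    obtain ⟨k, hk⟩ : ∃ k, y k ≠ xor2 (x k) (u k).1 := by
      by_contra hc
      push_neg at hc
      exact h (funext hc)
    exact Finset.prod_eq_zero (Finset.mem_univ k) (by rw [pauli1_eq, if_neg hk])

lemma inner_plus {n : ℕ} (A : QOp n) :
    star (ketPlus n) ⬝ᵥ A.mulVec (ketPlus n) = (1/2 : ℂ)^n * ∑ x, ∑ y, A x y := by
  have h2 : ((Real.sqrt 2 : ℝ) : ℂ) * ((Real.sqrt 2 : ℝ) : ℂ) = 2 := by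
    rw [← Complex.ofReal_mul, Real.mul_self_sqrt (by norm_num)]
    norm_num
  have hc : ((1 / (Real.sqrt 2 : ℂ)) ^ n) * ((1 / (Real.sqrt 2 : ℂ)) ^ n) = (1/2:ℂ)^n := by
    rw [← mul_pow]
    congr 1
    rw [div_mul_div_comm, one_mul, h2]
  have hstar : ∀ x, star (ketPlus n) x = (1 / (Real.sqrt 2 : ℂ)) ^ n := by
    intro x
    simp only [Pi.star_apply, ketPlus, RCLike.star_def]
    rw [← Complex.ofReal_one, ← Complex.ofReal_div, ← Complex.ofReal_pow, Complex.conj_ofReal]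
  unfold dotProduct Matrix.mulVec dotProduct
  simp only [hstar, ketPlus]
  rw [Finset.mul_sum]
  refine Finset.sum_congr rfl fun x _ => ?_
  rw [Finset.mul_sum, Finset.mul_sum]
  refine Finset.sum_congr rfl fun y _ => ?_
  rw [← hc]; ring

lemma conj_entry {n : ℕ} (U : QOp n) (hU : U ∈ Matrix.unitaryGroup (Fin n → Fin 2) ℂ)
    (hdiag : U.IsDiag) (u : PauliLabel n) (x y : Fin n → Fin 2) :
    (Uᴴ * pauliStr u * U) x y = conj (U x x) * pauliStr u x y * U y y := by
  rw [Matrix.mul_apply]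
  have h1 : ∀ q, (Uᴴ * pauliStr u) x q = conj (U x x) * pauliStr u x q := by
    intro q
    rw [Matrix.mul_apply]
    rw [Finset.sum_eq_single x]
    · rfl
    · intro p _ hp
      have : U p x = 0 := hdiag hp
      simp [Matrix.conjTranspose_apply, this]
    · simp
  simp only [h1]
  rw [Finset.sum_eq_single y]
  · intro q _ hq
    have : U q y = 0 := hdiag hq
    simp [this]
  · simp

end AuxDiag

theorem diag_plus_pm_one_iff {n : ℕ} (U : QOp n)
    (hU : U ∈ Matrix.unitaryGroup (Fin n → Fin 2) ℂ) (hdiag : U.IsDiag)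
    (u : PauliLabel n) :
    (star (ketPlus n) ⬝ᵥ (Uᴴ * pauliStr u * U).mulVec (ketPlus n) = 1 ∨
        star (ketPlus n) ⬝ᵥ (Uᴴ * pauliStr u * U).mulVec (ketPlus n) = -1) ↔
      ∃ (c : ℂ) (b : Fin n → ZMod 2), (c = 1 ∨ c = -1) ∧
        Uᴴ * pauliStr u * U = c • pauliStr (fun k => (b k, (0 : ZMod 2))) := by
  classical
  have hd : ∀ x, conj (U x x) * U x x = 1 := by
    intro x
    have h1 : star U * U = 1 := (Unitary.mem_iff.mp hU).1
    have he : (star U * U) x x = (1 : QOp n) x x := by rw [h1]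
    rw [Matrix.mul_apply, Matrix.one_apply_eq] at he
    rw [← he, Finset.sum_eq_single x]
    · rfl
    · intro p _ hp
      have h0 : U p x = 0 := hdiag hp
      simp [h0]
    · simp
  have hnsq : ∀ x, Complex.normSq (U x x) = 1 := by
    intro x
    have h1 := hd x
    rw [mul_comm, Complex.mul_conj] at h1
    exact_mod_cast h1
  have habs_d : ∀ x, ‖U x x‖ = 1 := by
    intro x
    rw [Complex.norm_def, hnsq x, Real.sqrt_one]
  set a : Fin n → ZMod 2 := (fun k => (u k).1) with ha
  have habs_m : ∀ y : Fin n → Fin 2, ‖∏ k, mu1 (u k) (y k)‖ = 1 := by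
    intro y
    rw [norm_prod]
    simp [mu1_abs]
  have hMentry := conj_entry U hU hdiag u
  set t : (Fin n → Fin 2) → ℂ :=
    fun x => conj (U x x) * (∏ k, mu1 (u k) (flipa a x k)) * U (flipa a x) (flipa a x) with htdef
  have habs_t : ∀ x, ‖t x‖ = 1 := by
    intro x
    rw [htdef]
    simp only []
    rw [norm_mul, norm_mul, Complex.norm_conj, habs_d, habs_m, habs_d]
    norm_num
  have hsum : ∀ x, ∑ y, (Uᴴ * pauliStr u * U) x y = t x := by
    intro x
    have h1 : ∀ y, (Uᴴ * pauliStr u * U) x y =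
        if y = flipa a x then conj (U x x) * (∏ k, mu1 (u k) (y k)) * U y y else 0 := by
      intro y
      rw [hMentry x y, pauliStr_eq]
      by_cases h : y = flipa a x
      · rw [if_pos h, if_pos h]
      · rw [if_neg h, if_neg h]; ring
    simp only [h1]
    rw [Finset.sum_ite_eq' Finset.univ (flipa a x)
      (fun y => conj (U x x) * (∏ k, mu1 (u k) (y k)) * U y y)]
    simp [htdef]
  have hcard : (Finset.univ : Finset (Fin n → Fin 2)).card = 2 ^ n := by
    simp [Finset.card_univ]
  have hinner : star (ketPlus n) ⬝ᵥ (Uᴴ * pauliStr u * U).mulVec (ketPlus n) =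
      (1/2 : ℂ)^n * ∑ x, t x := by
    rw [inner_plus]
    congr 1
    exact Finset.sum_congr rfl fun x _ => hsum x
  have hhalf : (1/2 : ℂ)^n * (2:ℂ)^n = 1 := by
    rw [← mul_pow]; norm_num
  constructor
  · rintro (h1 | h1)
    · -- all t x = 1
      have hS : ∑ x, t x = (2:ℂ)^n := by
        have h' : (1/2:ℂ)^n * ∑ x, t x = 1 := by rw [← hinner]; exact h1
        calc ∑ x, t x = (2:ℂ)^n * ((1/2:ℂ)^n * ∑ x, t x) := by
              rw [← mul_assoc, mul_comm ((2:ℂ)^n), hhalf, one_mul]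
          _ = (2:ℂ)^n := by rw [h', mul_one]
      have h4 : ((2:ℂ)^n).re = (2:ℝ)^n := by
        rw [show ((2:ℂ)^n) = (((2:ℝ)^n : ℝ) : ℂ) from by push_cast; ring, Complex.ofReal_re]
      have hre : ∑ x, (t x).re = (2:ℝ)^n := by
        have h2 := congrArg Complex.re hS
        rw [Complex.re_sum, h4] at h2
        exact h2
      have hle : ∀ x, (t x).re ≤ 1 := fun x =>
        (Complex.re_le_norm (t x)).trans_eq (habs_t x)
      have key : ∀ x, (t x).re = 1 := by
        by_contra hc
        push_neg at hc
        obtain ⟨x0, hx0⟩ := hc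
        have hlt : ∑ x, (t x).re < ∑ _x : Fin n → Fin 2, (1:ℝ) :=
          Finset.sum_lt_sum (fun i _ => hle i)
            ⟨x0, Finset.mem_univ x0, lt_of_le_of_ne (hle x0) hx0⟩
        rw [hre, Finset.sum_const, hcard, nsmul_eq_mul, mul_one] at hlt
        exact absurd hlt (by push_cast; simp)
      have hall : ∀ x, t x = 1 := by
        intro x
        have h2 : Complex.normSq (t x) = 1 := by
          rw [← Complex.sq_norm, habs_t x]; norm_num
        have h3 : (t x).re * (t x).re + (t x).im * (t x).im = 1 := by
          rw [← Complex.normSq_apply, h2]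
        have him : (t x).im = 0 := by nlinarith [key x]
        exact Complex.ext (by rw [key x, Complex.one_re]) (by rw [him, Complex.one_im])
      refine ⟨1, a, Or.inl rfl, ?_⟩
      rw [one_smul]
      ext x y
      rw [hMentry x y, pauliStr_eq u, pauliStr_eq (fun k => (a k, 0))]
      have hfl : (fun k => ((fun k => (a k, (0:ZMod 2))) k).1) = a := rfl
      by_cases h : y = flipa a x
      · rw [if_pos h, if_pos (by rw [hfl]; exact h)]
        have : conj (U x x) * (∏ k, mu1 (u k) (y k)) * U y y = t x := by
          rw [htdef, h]
        rw [this, hall x]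
        simp [mu1_X]
      · rw [if_neg h, if_neg (by rw [hfl]; exact h)]
        ring
    · -- all t x = -1
      have hS : ∑ x, t x = -(2:ℂ)^n := by
        have h' : (1/2:ℂ)^n * ∑ x, t x = -1 := by rw [← hinner]; exact h1
        calc ∑ x, t x = (2:ℂ)^n * ((1/2:ℂ)^n * ∑ x, t x) := by
              rw [← mul_assoc, mul_comm ((2:ℂ)^n), hhalf, one_mul]
          _ = -(2:ℂ)^n := by rw [h']; ring
      have h4 : ((2:ℂ)^n).re = (2:ℝ)^n := by
        rw [show ((2:ℂ)^n) = (((2:ℝ)^n : ℝ) : ℂ) from by push_cast; ring, Complex.ofReal_re]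
      have hre : ∑ x, (t x).re = -(2:ℝ)^n := by
        have h2 := congrArg Complex.re hS
        rw [Complex.re_sum, Complex.neg_re, h4] at h2
        exact h2
      have hle : ∀ x, -1 ≤ (t x).re := by
        intro x
        have h2 : |(t x).re| ≤ 1 := (Complex.abs_re_le_norm (t x)).trans_eq (habs_t x)
        linarith [abs_le.mp h2]
      have key : ∀ x, (t x).re = -1 := by
        by_contra hc
        push_neg at hc
        obtain ⟨x0, hx0⟩ := hc
        have hlt : ∑ _x : Fin n → Fin 2, (-1:ℝ) < ∑ x, (t x).re :=
          Finset.sum_lt_sum (fun i _ => hle i)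
            ⟨x0, Finset.mem_univ x0, lt_of_le_of_ne (hle x0) (Ne.symm hx0)⟩
        rw [hre, Finset.sum_const, hcard, nsmul_eq_mul, mul_neg_one] at hlt
        exact absurd hlt (by push_cast; simp)
      have hall : ∀ x, t x = -1 := by
        intro x
        have h2 : Complex.normSq (t x) = 1 := by
          rw [← Complex.sq_norm, habs_t x]; norm_num
        have h3 : (t x).re * (t x).re + (t x).im * (t x).im = 1 := by
          rw [← Complex.normSq_apply, h2]
        have him : (t x).im = 0 := by nlinarith [key x]
        refine Complex.ext ?_ ?_
        · rw [key x]; simp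
        · rw [him]; simp
      refine ⟨-1, a, Or.inr rfl, ?_⟩
      ext x y
      rw [hMentry x y, pauliStr_eq u, Matrix.smul_apply, pauliStr_eq (fun k => (a k, 0))]
      have hfl : (fun k => ((fun k => (a k, (0:ZMod 2))) k).1) = a := rfl
      by_cases h : y = flipa a x
      · rw [if_pos h, if_pos (by rw [hfl]; exact h)]
        have heq : conj (U x x) * (∏ k, mu1 (u k) (y k)) * U y y = t x := by
          rw [htdef, h]
        rw [heq, hall x]
        simp [mu1_X]
      · rw [if_neg h, if_neg (by rw [hfl]; exact h)]
        simp
  · rintro ⟨c, b, hc, hMe⟩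
    have hval : star (ketPlus n) ⬝ᵥ (Uᴴ * pauliStr u * U).mulVec (ketPlus n) = c := by
      rw [hMe, inner_plus]
      have h1 : ∀ x y : Fin n → Fin 2,
          (c • pauliStr (fun k => (b k, (0:ZMod 2)))) x y =
          c * (if y = flipa b x then 1 else 0) := by
        intro x y
        rw [Matrix.smul_apply, pauliStr_eq (fun k => (b k, 0)), smul_eq_mul]
        have hfl : (fun k => ((fun k => (b k, (0:ZMod 2))) k).1) = b := rfl
        rw [hfl]
        by_cases h : y = flipa b x
        · rw [if_pos h, if_pos h]
          simp [mu1_X]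
        · rw [if_neg h, if_neg h]
      simp only [h1]
      have h2 : ∀ x : Fin n → Fin 2,
          ∑ y, c * (if y = flipa b x then (1:ℂ) else 0) = c := by
        intro x
        rw [← Finset.mul_sum, Finset.sum_ite_eq' Finset.univ (flipa b x) (fun _ => (1:ℂ))]
        simp
      simp only [h2]
      rw [Finset.sum_const, hcard, nsmul_eq_mul, ← mul_assoc]
      push_cast
      rw [hhalf, one_mul]
    rcases hc with hc | hc
    · left; rw [hval, hc]
    · right; rw [hval, hc]
end

section
/- For n ≥ 3, the n-qubit unitary U = C^{n−1}Z · H^{⊗n} · C^{n−1}Z satisfies s(U) = 1, i.e., the only pair (u,v) with tr(σ_u U σ_v U†)/2^n = ±1 is u = v = identity; hence its unitary stabilizer nullity is v(U) = 2n. -/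
open Matrix Complex
open scoped Matrix ComplexConjugate Pointwise

noncomputable section

/-- The complex absolute value, as an `AbsoluteValue` (removed from Mathlib). -/
def Complex.abs : AbsoluteValue ℂ ℝ where
  toFun z := ‖z‖
  map_mul' := norm_mul
  nonneg' := norm_nonneg
  eq_zero' _ := norm_eq_zero
  add_le' := norm_add_le

lemma Complex.abs_ofReal (r : ℝ) : Complex.abs (r : ℂ) = |r| := Complex.norm_real r

lemma Complex.abs_two : Complex.abs 2 = 2 := by
  show ‖(2:ℂ)‖ = 2
  simp

@[simp] lemma Complex.abs_I : Complex.abs Complex.I = 1 := by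
  show ‖Complex.I‖ = 1
  simp

namespace CZ

def e2 (c : ZMod 2) (s : Fin 2) : ℂ := if c = 1 ∧ s = 1 then -1 else 1
def m2 (s t : Fin 2) : ℂ := if s = 1 ∧ t = 1 then -1 else 1
def add2 (t : Fin 2) (a : ZMod 2) : Fin 2 := if a = 1 then (if t = 0 then 1 else 0) else t
def ph (ab : ZMod 2 × ZMod 2) : ℂ := if ab = (1,1) then Complex.I else 1

lemma z2c : ∀ a : ZMod 2, a = 0 ∨ a = 1 := by decide
lemma f2c : ∀ a : Fin 2, a = 0 ∨ a = 1 := by decide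

lemma pauli1_apply (ab : ZMod 2 × ZMod 2) (s t : Fin 2) :
    pauli1 ab s t = ph ab * e2 ab.2 t * (if s = add2 t ab.1 then 1 else 0) := by
  obtain ⟨a, b⟩ := ab
  rcases z2c a with rfl | rfl <;> rcases z2c b with rfl | rfl <;> rcases f2c s with rfl | rfl <;> rcases f2c t with rfl | rfl <;>
    simp [pauli1, ph, e2, add2, pauliX, pauliY, pauliZ, Matrix.one_apply] <;>
    norm_num [Prod.ext_iff] <;> decide

lemma m2_mix (a b : ZMod 2) (s t : Fin 2) :
    m2 s (add2 t b) * m2 (add2 s a) t = e2 b s * e2 a t * (m2 s t * m2 s t) := by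
  rcases z2c a with rfl | rfl <;> rcases z2c b with rfl | rfl <;> rcases f2c s with rfl | rfl <;> rcases f2c t with rfl | rfl <;>
    norm_num [m2, add2, e2]

lemma e2_mul (b c : ZMod 2) (s : Fin 2) : e2 b s * e2 c s = e2 (b + c) s := by
  rcases z2c b with rfl | rfl <;> rcases z2c c with rfl | rfl <;> rcases f2c s with rfl | rfl <;>
    simp (config := { decide := true }) [e2]

lemma add2_add2 (t : Fin 2) (a : ZMod 2) : add2 (add2 t a) a = t := by
  fin_cases a <;> fin_cases t <;> decide

lemma e2_sum (c : ZMod 2) : ∑ t : Fin 2, e2 c t = if c = 0 then 2 else 0 := by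
  rcases z2c c with rfl | rfl <;> norm_num [Fin.sum_univ_two, e2] <;> decide

lemma e2_pm (c : ZMod 2) (s : Fin 2) : e2 c s = 1 ∨ e2 c s = -1 := by
  unfold e2; split <;> simp

lemma add2_zero (t : Fin 2) : add2 t 0 = t := by fin_cases t <;> decide


variable {n : ℕ}

def fsgn (x : Fin n → Fin 2) : ℂ := if (∀ k, x k = 1) then -1 else 1
def shiftv (a : Fin n → ZMod 2) (y : Fin n → Fin 2) : Fin n → Fin 2 :=
  fun k => add2 (y k) (a k)
def chi (L : Fin n → ZMod 2) (y : Fin n → Fin 2) : ℂ := ∏ k, e2 (L k) (y k)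
def Ssum (n : ℕ) (L a : Fin n → ZMod 2) : ℂ :=
  ∑ y : Fin n → Fin 2, chi L y * (fsgn y * fsgn (shiftv a y))

lemma shiftv_shiftv (a : Fin n → ZMod 2) (y : Fin n → Fin 2) :
    shiftv a (shiftv a y) = y := by
  funext k; exact add2_add2 _ _

lemma CnZ_mul_apply (A : QOp n) (x y : Fin n → Fin 2) :
    (CnZ n * A) x y = fsgn x * A x y := by
  rw [Matrix.mul_apply]
  simp [CnZ, fsgn, ite_mul]

lemma mul_CnZ_apply (A : QOp n) (x y : Fin n → Fin 2) :
    (A * CnZ n) x y = A x y * fsgn y := by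
  rw [Matrix.mul_apply]
  simp [CnZ, fsgn, mul_ite]

lemma U_apply (x y : Fin n → Fin 2) :
    (CnZ n * HadN n * CnZ n) x y = fsgn x * HadN n x y * fsgn y := by
  rw [mul_CnZ_apply, CnZ_mul_apply]

lemma HadN_apply (x y : Fin n → Fin 2) :
    HadN n x y = ∏ k, ((1 / (Real.sqrt 2) : ℂ) * m2 (x k) (y k)) := rfl

lemma star_HadN (x y : Fin n → Fin 2) : star (HadN n x y) = HadN n x y := by
  rw [HadN_apply, star_prod]
  refine Finset.prod_congr rfl fun k _ => ?_
  unfold m2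
  split <;> simp [Complex.star_def, Complex.conj_ofReal]

lemma star_fsgn (x : Fin n → Fin 2) : star (fsgn x) = fsgn x := by
  unfold fsgn; split <;> simp

lemma star_U (x y : Fin n → Fin 2) :
    star ((CnZ n * HadN n * CnZ n) x y) = (CnZ n * HadN n * CnZ n) x y := by
  rw [U_apply, star_mul', star_mul', star_fsgn, star_fsgn, star_HadN, ← U_apply]

lemma prod_ind {P : Fin n → Prop} [DecidablePred P] :
    (∏ k, if P k then (1:ℂ) else 0) = if ∀ k, P k then 1 else 0 := by
  by_cases h : ∀ k, P k
  · simp [h]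
  · rw [if_neg h]
    push_neg at h
    obtain ⟨k, hk⟩ := h
    exact Finset.prod_eq_zero (Finset.mem_univ k) (by simp [hk])

lemma pauliStr_apply (u : PauliLabel n) (x y : Fin n → Fin 2) :
    pauliStr u x y = (∏ k, ph (u k)) * chi (fun k => (u k).2) y *
      (if x = shiftv (fun k => (u k).1) y then 1 else 0) := by
  show (∏ k, pauli1 (u k) (x k) (y k)) = _
  calc ∏ k, pauli1 (u k) (x k) (y k)
      = ∏ k, (ph (u k) * e2 (u k).2 (y k) *
          (if x k = add2 (y k) (u k).1 then 1 else 0)) := by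
        refine Finset.prod_congr rfl fun k _ => pauli1_apply _ _ _
    _ = _ := by
        rw [Finset.prod_mul_distrib, Finset.prod_mul_distrib, prod_ind]
        unfold chi shiftv
        congr 1
        refine if_congr ?_ rfl rfl
        exact ⟨fun h => funext h, fun h k => congrFun h k⟩

lemma trace_mul_expand (A B : QOp n) :
    (A * B).trace = ∑ x, ∑ y, A x y * B y x := by
  simp [Matrix.trace, Matrix.diag, Matrix.mul_apply]

lemma trace_pauli_left (u : PauliLabel n) (B : QOp n) :
    (pauliStr u * B).trace = (∏ k, ph (u k)) *
      ∑ x, chi (fun k => (u k).2) x * B x (shiftv (fun k => (u k).1) x) := by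
  rw [trace_mul_expand, Finset.sum_comm, Finset.mul_sum]
  refine Finset.sum_congr rfl fun x _ => ?_
  simp only [pauliStr_apply, ite_mul, mul_ite, mul_one, mul_zero, one_mul, zero_mul,
    Finset.sum_ite_eq', Finset.mem_univ, if_true]
  ring

lemma B_apply (v : PauliLabel n) (U : QOp n) (x z' : Fin n → Fin 2) :
    (U * pauliStr v * Uᴴ) x z' = (∏ k, ph (v k)) *
      ∑ z, chi (fun k => (v k).2) z *
        (U x (shiftv (fun k => (v k).1) z) * star (U z' z)) := by
  rw [Matrix.mul_apply, Finset.mul_sum]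
  refine Finset.sum_congr rfl fun j _ => ?_
  rw [Matrix.mul_apply, Matrix.conjTranspose_apply, Finset.sum_mul]
  have h : ∀ w, (U x w * pauliStr v w j) * star (U z' j) =
      if w = shiftv (fun k => (v k).1) j then
        (∏ k, ph (v k)) * (chi (fun k => (v k).2) j *
          (U x w * star (U z' j))) else 0 := by
    intro w; rw [pauliStr_apply]; split <;> ring
  rw [Finset.sum_congr rfl fun w _ => h w, Finset.sum_ite_eq' Finset.univ]
  simp only [Finset.mem_univ, if_true]

lemma m2_sq (s t : Fin 2) : m2 s t * m2 s t = 1 := by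
  unfold m2; split <;> norm_num

lemma r_mul_r : ((1 / (Real.sqrt 2) : ℂ)) * ((1 / (Real.sqrt 2) : ℂ)) = 1/2 := by
  rw [div_mul_div_comm, one_mul, ← Complex.ofReal_mul,
    Real.mul_self_sqrt (by norm_num)]
  norm_num

lemma HadN_mix (au av : Fin n → ZMod 2) (x z : Fin n → Fin 2) :
    HadN n x (shiftv av z) * HadN n (shiftv au x) z
      = ((1:ℂ)/2)^n * (chi av x * chi au z) := by
  rw [HadN_apply, HadN_apply, ← Finset.prod_mul_distrib]
  have : ∀ k : Fin n, ((1 / (Real.sqrt 2) : ℂ) * m2 (x k) (shiftv av z k)) *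
      ((1 / (Real.sqrt 2) : ℂ) * m2 (shiftv au x k) (z k))
      = ((1:ℂ)/2) * (e2 (av k) (x k) * e2 (au k) (z k)) := by
    intro k
    have h1 := m2_mix (au k) (av k) (x k) (z k)
    have h2 := m2_sq (x k) (z k)
    have : m2 (x k) (shiftv av z k) * m2 (shiftv au x k) (z k)
        = e2 (av k) (x k) * e2 (au k) (z k) := by
      unfold shiftv
      rw [h1, h2, mul_one]
    calc ((1 / (Real.sqrt 2) : ℂ) * m2 (x k) (shiftv av z k)) *
        ((1 / (Real.sqrt 2) : ℂ) * m2 (shiftv au x k) (z k))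
        = ((1 / (Real.sqrt 2) : ℂ) * (1 / (Real.sqrt 2) : ℂ)) *
          (m2 (x k) (shiftv av z k) * m2 (shiftv au x k) (z k)) := by ring
      _ = _ := by rw [r_mul_r, this]
  rw [Finset.prod_congr rfl fun k _ => this k, Finset.prod_mul_distrib,
    Finset.prod_const, Finset.card_univ, Fintype.card_fin]
  unfold chi
  rw [Finset.prod_mul_distrib]

lemma chi_mul (b c : Fin n → ZMod 2) (x : Fin n → Fin 2) :
    chi b x * chi c x = chi (fun k => b k + c k) x := by
  unfold chi
  rw [← Finset.prod_mul_distrib]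
  exact Finset.prod_congr rfl fun k _ => e2_mul _ _ _

lemma master (u v : PauliLabel n) :
    PauliFun (CnZ n * HadN n * CnZ n) u v =
      (∏ k, ph (u k)) * (∏ k, ph (v k)) *
        (Ssum n (fun k => (u k).2 + (v k).1) (fun k => (u k).1) *
         Ssum n (fun k => (v k).2 + (u k).1) (fun k => (v k).1)) / 4 ^ n := by
  set U : QOp n := CnZ n * HadN n * CnZ n with hU
  have assoc : pauliStr u * U * pauliStr v * Uᴴ = pauliStr u * (U * pauliStr v * Uᴴ) := by
    simp only [mul_assoc]
  unfold PauliFun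
  rw [assoc, trace_pauli_left]
  have key : ∑ x, chi (fun k => (u k).2) x *
      (U * pauliStr v * Uᴴ) x (shiftv (fun k => (u k).1) x)
      = (∏ k, ph (v k)) * (((1:ℂ)/2)^n *
        (Ssum n (fun k => (u k).2 + (v k).1) (fun k => (u k).1) *
         Ssum n (fun k => (v k).2 + (u k).1) (fun k => (v k).1))) := by
    have hterm : ∀ x z : Fin n → Fin 2,
        chi (fun k => (u k).2) x * (chi (fun k => (v k).2) z *
          (U x (shiftv (fun k => (v k).1) z) * star (U (shiftv (fun k => (u k).1) x) z)))
        = ((1:ℂ)/2)^n *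
          ((chi (fun k => (u k).2 + (v k).1) x * (fsgn x * fsgn (shiftv (fun k => (u k).1) x))) *
           (chi (fun k => (v k).2 + (u k).1) z * (fsgn z * fsgn (shiftv (fun k => (v k).1) z)))) := by
      intro x z
      rw [hU, star_U, U_apply, U_apply, ← chi_mul, ← chi_mul]
      have := HadN_mix (fun k => (u k).1) (fun k => (v k).1) x z
      calc chi (fun k => (u k).2) x * (chi (fun k => (v k).2) z *
          ((fsgn x * HadN n x (shiftv (fun k => (v k).1) z) * fsgn (shiftv (fun k => (v k).1) z)) *
           (fsgn (shiftv (fun k => (u k).1) x) * HadN n (shiftv (fun k => (u k).1) x) z * fsgn z)))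
          = (HadN n x (shiftv (fun k => (v k).1) z) * HadN n (shiftv (fun k => (u k).1) x) z) *
            (chi (fun k => (u k).2) x * chi (fun k => (v k).2) z *
              (fsgn x * fsgn (shiftv (fun k => (u k).1) x)) *
              (fsgn z * fsgn (shiftv (fun k => (v k).1) z))) := by ring
        _ = _ := by rw [this]; ring
    calc ∑ x, chi (fun k => (u k).2) x *
        (U * pauliStr v * Uᴴ) x (shiftv (fun k => (u k).1) x)
        = ∑ x, (∏ k, ph (v k)) * ∑ z, chi (fun k => (u k).2) x *
            (chi (fun k => (v k).2) z *
              (U x (shiftv (fun k => (v k).1) z) *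
                star (U (shiftv (fun k => (u k).1) x) z))) := by
          refine Finset.sum_congr rfl fun x _ => ?_
          rw [B_apply, Finset.mul_sum, Finset.mul_sum, Finset.mul_sum]
          refine Finset.sum_congr rfl fun z _ => ?_
          ring
      _ = (∏ k, ph (v k)) * ∑ x, ∑ z, ((1:ℂ)/2)^n *
            ((chi (fun k => (u k).2 + (v k).1) x *
               (fsgn x * fsgn (shiftv (fun k => (u k).1) x))) *
             (chi (fun k => (v k).2 + (u k).1) z *
               (fsgn z * fsgn (shiftv (fun k => (v k).1) z)))) := by
          rw [← Finset.mul_sum]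
          congr 1
          refine Finset.sum_congr rfl fun x _ => ?_
          refine Finset.sum_congr rfl fun z _ => hterm x z
      _ = _ := by
          congr 1
          unfold Ssum
          rw [Finset.sum_mul_sum, Finset.mul_sum]
          refine Finset.sum_congr rfl fun x _ => ?_
          rw [Finset.mul_sum]
  rw [key]
  have h2 : ((2:ℂ))^n ≠ 0 := pow_ne_zero _ two_ne_zero
  have h44 : ((4:ℂ))^n ≠ 0 := pow_ne_zero _ (by norm_num)
  have h4 : ((1:ℂ)/2)^n * 4^n = 2^n := by rw [← mul_pow]; norm_num
  rw [div_eq_div_iff h2 h44, ← h4]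
  ring

def IsPM (x : ℂ) : Prop := x = 1 ∨ x = -1

lemma IsPM.abs_eq {x : ℂ} (h : IsPM x) : Complex.abs x = 1 := by
  rcases h with h | h <;> simp [h]

lemma IsPM.mul {x y : ℂ} (hx : IsPM x) (hy : IsPM y) : IsPM (x * y) := by
  rcases hx with h | h <;> rcases hy with h' | h' <;> subst h <;> subst h' <;>
    simp [IsPM]

lemma chi_pm (L : Fin n → ZMod 2) (y : Fin n → Fin 2) : IsPM (chi L y) :=
  Finset.prod_induction _ IsPM (fun _ _ => IsPM.mul) (Or.inl rfl)
    (fun k _ => e2_pm (L k) (y k))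

lemma fsgn_pm (y : Fin n → Fin 2) : IsPM (fsgn y) := by
  unfold fsgn; split
  · exact Or.inr rfl
  · exact Or.inl rfl

lemma card_strings : (Finset.univ : Finset (Fin n → Fin 2)).card = 2 ^ n := by
  simp [Finset.card_univ]

lemma sum_chi (L : Fin n → ZMod 2) :
    ∑ y : Fin n → Fin 2, chi L y = if (∀ k, L k = 0) then (2:ℂ)^n else 0 := by
  unfold chi
  rw [← Fintype.prod_sum]
  by_cases h : ∀ k, L k = 0
  · rw [if_pos h]
    rw [Finset.prod_congr rfl fun k _ => by rw [e2_sum, if_pos (h k)]]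
    simp
  · rw [if_neg h]
    push_neg at h
    obtain ⟨k, hk⟩ := h
    exact Finset.prod_eq_zero (Finset.mem_univ k) (by rw [e2_sum, if_neg hk])

lemma Ssum_zero (L a : Fin n → ZMod 2) (hL : ∀ k, L k = 0) (ha : ∀ k, a k = 0) :
    Ssum n L a = 2 ^ n := by
  unfold Ssum
  have hsh : ∀ y : Fin n → Fin 2, shiftv a y = y := by
    intro y; funext k; rw [shiftv, ha k, add2_zero]
  have : ∀ y : Fin n → Fin 2, chi L y * (fsgn y * fsgn (shiftv a y)) = chi L y := by
    intro y
    rw [hsh y]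
    rcases fsgn_pm y with h | h <;> rw [h] <;> ring
  rw [Finset.sum_congr rfl fun y _ => this y, sum_chi, if_pos hL]

lemma Ssum_abs_le (L a : Fin n → ZMod 2) : Complex.abs (Ssum n L a) ≤ 2 ^ n := by
  unfold Ssum
  refine le_trans (Complex.abs.sum_le _ _) ?_
  have : ∀ y : Fin n → Fin 2,
      Complex.abs (chi L y * (fsgn y * fsgn (shiftv a y))) = 1 := by
    intro y
    exact (((chi_pm L y).mul ((fsgn_pm y).mul (fsgn_pm _)))).abs_eq
  rw [Finset.sum_congr rfl fun y _ => this y]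
  simp

lemma two_pow_big (hn : 3 ≤ n) : (8:ℝ) ≤ 2 ^ n := by
  calc (8:ℝ) = 2 ^ 3 := by norm_num
    _ ≤ 2 ^ n := pow_le_pow_right₀ (by norm_num) hn

lemma Ssum_small (hn : 3 ≤ n) (L a : Fin n → ZMod 2)
    (h : ¬ ((∀ k, L k = 0) ∧ (∀ k, a k = 0))) :
    Complex.abs (Ssum n L a) ≤ 2 ^ n - 4 := by
  have h8 := two_pow_big hn
  by_cases ha : ∀ k, a k = 0
  · -- a = 0, so L ≠ 0 and the sum is 0
    have hL : ¬ ∀ k, L k = 0 := fun hL => h ⟨hL, ha⟩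
    have hsh : ∀ y : Fin n → Fin 2, shiftv a y = y := by
      intro y; funext k; rw [shiftv, ha k, add2_zero]
    have : Ssum n L a = 0 := by
      unfold Ssum
      have : ∀ y : Fin n → Fin 2, chi L y * (fsgn y * fsgn (shiftv a y)) = chi L y := by
        intro y
        rw [hsh y]
        rcases fsgn_pm y with hh | hh <;> rw [hh] <;> ring
      rw [Finset.sum_congr rfl fun y _ => this y, sum_chi, if_neg hL]
    rw [this]
    simp
    linarith
  · -- a ≠ 0
    push_neg at ha
    obtain ⟨k₀, hk₀⟩ := ha
    have hk1 : a k₀ = 1 := by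
      have h01 : ∀ x : ZMod 2, x ≠ 0 → x = 1 := by decide
      exact h01 _ hk₀
    set p : Fin n → Fin 2 := fun _ => 1 with hp
    set q : Fin n → Fin 2 := shiftv a p with hq
    have hqp : q ≠ p := by
      intro hE
      have := congrFun hE k₀
      rw [hq, shiftv, hk1] at this
      simp [add2, hp] at this
    have hfsgn_p : fsgn p = -1 := by rw [fsgn, if_pos (fun k => rfl)]
    have hfsgn_ne : ∀ y : Fin n → Fin 2, y ≠ p → fsgn y = 1 := by
      intro y hy
      rw [fsgn, if_neg]
      intro hall
      exact hy (funext hall)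
    have key : ∀ y : Fin n → Fin 2, fsgn y * fsgn (shiftv a y) =
        1 - (if y = p then 2 else 0) - (if y = q then 2 else 0) := by
      intro y
      by_cases h1 : y = p
      · subst h1
        rw [if_pos rfl, if_neg (fun hE => hqp hE.symm), hfsgn_p, ← hq,
          hfsgn_ne q hqp]
        ring
      · by_cases h2 : y = q
        · subst h2
          rw [if_neg h1, if_pos rfl, hfsgn_ne q hqp, hq, shiftv_shiftv, hfsgn_p]
          ring
        · rw [if_neg h1, if_neg h2, hfsgn_ne y h1, hfsgn_ne (shiftv a y)]
          · ring
          · intro hE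
            apply h2
            rw [hq, ← hE, shiftv_shiftv]
      done
    have hsplit : Ssum n L a = (∑ y : Fin n → Fin 2, chi L y)
        - 2 * chi L p - 2 * chi L q := by
      unfold Ssum
      rw [Finset.sum_congr rfl fun y _ => by rw [key y]]
      have expand : ∀ y : Fin n → Fin 2,
          chi L y * (1 - (if y = p then 2 else 0) - (if y = q then 2 else 0)) =
          chi L y - (if y = p then chi L y * 2 else 0)
            - (if y = q then chi L y * 2 else 0) := by
        intro y
        rw [mul_sub, mul_sub, mul_one, mul_ite, mul_ite, mul_zero]
      rw [Finset.sum_congr rfl fun y _ => expand y, Finset.sum_sub_distrib,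
        Finset.sum_sub_distrib, Finset.sum_ite_eq' Finset.univ p,
        Finset.sum_ite_eq' Finset.univ q]
      simp
      ring
    by_cases hL : ∀ k, L k = 0
    · have hchi : ∀ y : Fin n → Fin 2, chi L y = 1 := by
        intro y
        unfold chi
        refine Finset.prod_eq_one fun k _ => ?_
        rw [hL k, e2]
        rw [if_neg]
        rintro ⟨h0, -⟩
        exact one_ne_zero (by exact h0.symm)
      rw [hsplit, sum_chi, if_pos hL, hchi, hchi]
      have : (2:ℂ)^n - 2 * 1 - 2 * 1 = (((2:ℝ)^n - 4 : ℝ) : ℂ) := by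
        push_cast; ring
      rw [this, Complex.abs_ofReal,
        _root_.abs_of_nonneg (show (0:ℝ) ≤ 2^n - 4 by linarith)]
    · rw [hsplit, sum_chi, if_neg hL]
      have h1 := (chi_pm L p).abs_eq
      have h2 := (chi_pm L q).abs_eq
      calc Complex.abs (0 - 2 * chi L p - 2 * chi L q)
          ≤ Complex.abs (0 - 2 * chi L p) + Complex.abs (2 * chi L q) := by
            exact Complex.abs.sub_le_add _ _
        _ = 4 := by
            rw [zero_sub, Complex.abs.map_neg, _root_.map_mul, _root_.map_mul,
              h1, h2, Complex.abs_two]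
            norm_num
        _ ≤ 2^n - 4 := by linarith

lemma prodph_abs (u : PauliLabel n) : Complex.abs (∏ k, ph (u k)) = 1 := by
  rw [map_prod]
  refine Finset.prod_eq_one fun k _ => ?_
  unfold ph
  split <;> simp

lemma P_iff (hn : 3 ≤ n) (u v : PauliLabel n) :
    (PauliFun (CnZ n * HadN n * CnZ n) u v = 1 ∨
        PauliFun (CnZ n * HadN n * CnZ n) u v = -1) ↔ (u = 0 ∧ v = 0) := by
  have h8 := two_pow_big hn
  have h4C : ((4:ℂ))^n ≠ 0 := pow_ne_zero _ (by norm_num)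
  constructor
  · intro hP
    by_contra hne
    have habs : Complex.abs (PauliFun (CnZ n * HadN n * CnZ n) u v) = 1 := by
      rcases hP with h | h <;> rw [h] <;> simp
    rw [master] at habs
    set S1 := Ssum n (fun k => (u k).2 + (v k).1) (fun k => (u k).1) with hS1
    set S2 := Ssum n (fun k => (v k).2 + (u k).1) (fun k => (v k).1) with hS2
    have habs2 : Complex.abs S1 * Complex.abs S2 = 4 ^ n := by
      rw [map_div₀, _root_.map_mul, _root_.map_mul, prodph_abs, prodph_abs,
        _root_.map_mul, map_pow] at habs
      have h4 : Complex.abs 4 = 4 := by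
        rw [show (4:ℂ) = ((4:ℝ):ℂ) by norm_num, Complex.abs_ofReal]
        norm_num
      rw [h4, one_mul, one_mul, div_eq_one_iff_eq (by positivity)] at habs
      exact habs
    have hsmall : Complex.abs S1 ≤ 2^n - 4 ∨ Complex.abs S2 ≤ 2^n - 4 := by
      by_cases hc1 : (∀ k, ((u k).2 + (v k).1) = 0) ∧ (∀ k, (u k).1 = 0)
      · by_cases hc2 : (∀ k, ((v k).2 + (u k).1) = 0) ∧ (∀ k, (v k).1 = 0)
        · exfalso
          apply hne
          have z1 : ∀ x y : ZMod 2, x + y = 0 → y = 0 → x = 0 := by decide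
          constructor
          · funext k
            have hu2 : (u k).2 = 0 := z1 _ _ (hc1.1 k) (hc2.2 k)
            have hu1 : (u k).1 = 0 := hc1.2 k
            show u k = (0, 0)
            exact Prod.ext hu1 hu2
          · funext k
            have hv2 : (v k).2 = 0 := z1 _ _ (hc2.1 k) (hc1.2 k)
            have hv1 : (v k).1 = 0 := hc2.2 k
            show v k = (0, 0)
            exact Prod.ext hv1 hv2
        · exact Or.inr (Ssum_small hn _ _ hc2)
      · exact Or.inl (Ssum_small hn _ _ hc1)
    have hb1 := Ssum_abs_le (n := n) (fun k => (u k).2 + (v k).1) (fun k => (u k).1)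
    have hb2 := Ssum_abs_le (n := n) (fun k => (v k).2 + (u k).1) (fun k => (v k).1)
    rw [← hS1] at hb1
    rw [← hS2] at hb2
    have hnn1 : 0 ≤ Complex.abs S1 := Complex.abs.nonneg _
    have hnn2 : 0 ≤ Complex.abs S2 := Complex.abs.nonneg _
    have h4R : ((4:ℝ))^n = 2^n * 2^n := by rw [← mul_pow]; norm_num
    rcases hsmall with hs | hs <;> nlinarith
  · rintro ⟨hu, hv⟩
    subst hu; subst hv
    left
    rw [master]
    have hz : ∀ k : Fin n, (((0 : PauliLabel n) k).2 + ((0 : PauliLabel n) k).1) = 0 := by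
      intro k; simp
    have hz1 : ∀ k : Fin n, ((0 : PauliLabel n) k).1 = 0 := by intro k; simp
    rw [Ssum_zero _ _ hz hz1]
    have hph : ∀ k : Fin n, ph ((0 : PauliLabel n) k) = 1 := by
      intro k
      show ph (0, 0) = 1
      rw [ph, if_neg (by decide)]
    rw [Finset.prod_congr rfl fun k _ => hph k, Finset.prod_const_one]
    have : ((2:ℂ))^n * 2^n = 4^n := by rw [← mul_pow]; norm_num
    rw [one_mul, one_mul, this, div_self h4C]

end CZ
end

theorem czhcz_nullity_two_n {n : ℕ} (hn : 3 ≤ n) :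
    sU (CnZ n * HadN n * CnZ n) = 1 ∧
      (∀ u v : PauliLabel n,
        (PauliFun (CnZ n * HadN n * CnZ n) u v = 1 ∨
            PauliFun (CnZ n * HadN n * CnZ n) u v = -1) ↔ (u = 0 ∧ v = 0)) ∧
      nullity (CnZ n * HadN n * CnZ n) = 2 * n := by
  have hiff := fun u v => CZ.P_iff hn u v
  have hset : {p : PauliLabel n × PauliLabel n |
      PauliFun (CnZ n * HadN n * CnZ n) p.1 p.2 = 1 ∨
      PauliFun (CnZ n * HadN n * CnZ n) p.1 p.2 = -1} = {((0 : PauliLabel n), (0 : PauliLabel n))} := by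
    ext p
    simp only [Set.mem_setOf_eq, Set.mem_singleton_iff]
    rw [hiff p.1 p.2]
    constructor
    · rintro ⟨h1, h2⟩; exact Prod.ext h1 h2
    · rintro rfl; exact ⟨rfl, rfl⟩
  have hsU : sU (CnZ n * HadN n * CnZ n) = 1 := by
    rw [sU, hset, Set.ncard_singleton]
  refine ⟨hsU, hiff, ?_⟩
  show (2 * n : ℝ) - Real.logb 2 (sU (CnZ n * HadN n * CnZ n)) = 2 * n
  rw [hsU, Nat.cast_one, Real.logb_one, sub_zero]
end

section
/- Let |Φ⟩ = 2^{−n/2} ∑_{x ∈ {0,1}^n} |x⟩|x⟩ be the 2n-qubit maximally entangled state. For any n-qubit unitary U and any Pauli strings u, v, the state Pauli function satisfies ⟨Φ|(σ_u ⊗ U†σ_v U)|Φ⟩ = ±tr(σ_v U σ_u U†)/2^n, where the sign depends only on u. Consequently s((I ⊗ U)|Φ⟩) = s(U) and v_s((I⊗U)|Φ⟩) = v(U). -/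
open Matrix Complex
open scoped Matrix ComplexConjugate Pointwise

section Aux
open Matrix Complex
open scoped Matrix ComplexConjugate

set_option maxRecDepth 8000

noncomputable section

def splitFun {n m : ℕ} {α : Type*} : (Fin (n+m) → α) ≃ (Fin n → α) × (Fin m → α) where
  toFun x := (fun i => x (Fin.castAdd m i), fun j => x (Fin.natAdd n j))
  invFun p := Fin.append p.1 p.2
  left_inv x := funext fun i => by
    induction i using Fin.addCases with
    | left i => simp
    | right j => simp
  right_inv p := by
    ext i <;> simp

lemma sum_split {n m : ℕ} {α : Type*} [Fintype α] [DecidableEq α] (f : (Fin (n+m) → α) → ℂ) :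
    ∑ x, f x = ∑ a : Fin n → α, ∑ b : Fin m → α, f (Fin.append a b) := by
  rw [← Equiv.sum_comp (splitFun (n:=n) (m:=m) (α:=α)).symm f, Fintype.sum_prod_type]
  rfl

lemma tensorOp_apply_append {n m : ℕ} (A : QOp n) (B : QOp m)
    (a c : Fin n → Fin 2) (b d : Fin m → Fin 2) :
    tensorOp A B (Fin.append a b) (Fin.append c d) = A a c * B b d := by
  simp [tensorOp]

lemma tensorOp_mul {n m : ℕ} (A C : QOp n) (B D : QOp m) :
    tensorOp A B * tensorOp C D = tensorOp (A * C) (B * D) := by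
  ext x y
  rw [Matrix.mul_apply, sum_split]
  simp only [tensorOp, Matrix.of_apply, Matrix.mul_apply]
  rw [Finset.sum_mul_sum]
  refine Finset.sum_congr rfl fun a _ => Finset.sum_congr rfl fun b _ => ?_
  simp only [Fin.append_left, Fin.append_right]
  ring

lemma tensorOp_conjTranspose {n m : ℕ} (A : QOp n) (B : QOp m) :
    (tensorOp A B)ᴴ = tensorOp Aᴴ Bᴴ := by
  ext x y
  simp [tensorOp, Matrix.conjTranspose_apply, star_mul', mul_comm]

lemma pauliStr_split {n m : ℕ} (w : PauliLabel (n + m)) :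
    pauliStr w = tensorOp (pauliStr (fstLab w)) (pauliStr (sndLab w)) := by
  ext x y
  simp only [pauliStr, tensorOp, fstLab, sndLab, Matrix.of_apply]
  rw [Fin.prod_univ_add]

def pSign {n : ℕ} (u : PauliLabel n) : ℂ := ∏ k, if u k = (1,1) then (-1 : ℂ) else 1

lemma pSign_one_or_neg_one {n : ℕ} (u : PauliLabel n) : pSign u = 1 ∨ pSign u = -1 := by
  unfold pSign
  refine Finset.prod_induction _ (fun x => x = 1 ∨ x = -1) ?_ (Or.inl rfl) ?_
  · rintro a b (rfl | rfl) (rfl | rfl) <;> norm_num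
  · intro k _
    split <;> simp

lemma pauli1_apply_swap (ab : ZMod 2 × ZMod 2) (i j : Fin 2) :
    pauli1 ab j i = (if ab = (1,1) then (-1 : ℂ) else 1) * pauli1 ab i j := by
  obtain ⟨a, b⟩ := ab
  fin_cases a <;> fin_cases b <;> fin_cases i <;> fin_cases j <;>
    simp (config := { decide := true }) [pauli1, pauliX, pauliY, pauliZ, Matrix.one_apply]

lemma pauliStr_transpose {n : ℕ} (u : PauliLabel n) :
    (pauliStr u)ᵀ = pSign u • pauliStr u := by
  ext x y
  simp only [Matrix.transpose_apply, Matrix.smul_apply, pauliStr, Matrix.of_apply, pSign,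
    smul_eq_mul]
  rw [← Finset.prod_mul_distrib]
  exact Finset.prod_congr rfl fun k _ => pauli1_apply_swap (u k) (x k) (y k)

lemma star_maxEnt (n : ℕ) : star (maxEnt n) = maxEnt n := by
  funext x
  simp only [Pi.star_apply, maxEnt]
  split <;> simp [← Complex.ofReal_one, ← Complex.ofReal_div, ← Complex.ofReal_pow]

lemma half_pow (n : ℕ) : ((1 / (Real.sqrt 2 : ℂ)) ^ n) * ((1 / (Real.sqrt 2 : ℂ)) ^ n)
    = 1 / 2 ^ n := by
  rw [← mul_pow, div_mul_div_comm, one_mul, ← Complex.ofReal_mul,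
    Real.mul_self_sqrt (by norm_num)]
  norm_num [div_pow]

lemma maxEnt_inner {n : ℕ} (A B : QOp n) :
    star (maxEnt n) ⬝ᵥ (tensorOp A B).mulVec (maxEnt n) = (A * Bᵀ).trace / 2 ^ n := by
  rw [star_maxEnt]
  simp only [dotProduct, Matrix.mulVec, dotProduct]
  rw [sum_split]
  have happ : ∀ a b : Fin n → Fin 2, maxEnt n (Fin.append a b)
      = if a = b then (1 / (Real.sqrt 2 : ℂ)) ^ n else 0 := by
    intro a b
    simp only [maxEnt]
    congr 1
    simp only [eq_iff_iff]
    constructor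
    · intro h
      funext i
      have := congrFun h i
      rwa [Fin.append_left, Fin.append_right] at this
    · rintro rfl
      funext i
      rw [Fin.append_left, Fin.append_right]
  calc ∑ a : Fin n → Fin 2, ∑ b : Fin n → Fin 2,
        maxEnt n (Fin.append a b) *
          ∑ y, tensorOp A B (Fin.append a b) y * maxEnt n y
      = ∑ a : Fin n → Fin 2, ∑ b : Fin n → Fin 2,
        maxEnt n (Fin.append a b) * ∑ c : Fin n → Fin 2, ∑ d : Fin n → Fin 2,
          tensorOp A B (Fin.append a b) (Fin.append c d) * maxEnt n (Fin.append c d) := by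
        refine Finset.sum_congr rfl fun a _ => Finset.sum_congr rfl fun b _ => ?_
        rw [sum_split]
    _ = ∑ a : Fin n → Fin 2, ∑ c : Fin n → Fin 2,
          (1 / (Real.sqrt 2 : ℂ)) ^ n * (A a c * B a c) * (1 / (Real.sqrt 2 : ℂ)) ^ n := by
        simp only [happ, tensorOp_apply_append]
        refine Finset.sum_congr rfl fun a _ => ?_
        rw [Finset.sum_eq_single a (fun b _ hb => by rw [if_neg (fun h => hb h.symm), zero_mul])
          (fun h => absurd (Finset.mem_univ a) h), if_pos rfl, Finset.mul_sum]
        refine Finset.sum_congr rfl fun c _ => ?_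
        rw [Finset.mul_sum, Finset.sum_eq_single c
          (fun d _ hd => by rw [if_neg (fun h => hd h.symm), mul_zero, mul_zero])
          (fun h => absurd (Finset.mem_univ c) h), if_pos rfl]
        ring
    _ = ∑ a : Fin n → Fin 2, ∑ c : Fin n → Fin 2, A a c * B a c * (1 / 2 ^ n) := by
        refine Finset.sum_congr rfl fun a _ => Finset.sum_congr rfl fun c _ => ?_
        rw [← half_pow n]
        ring
    _ = (A * Bᵀ).trace / 2 ^ n := by
        rw [Matrix.trace, Finset.sum_div]
        refine Finset.sum_congr rfl fun a _ => ?_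
        rw [Matrix.diag_apply, Matrix.mul_apply, Finset.sum_div]
        refine Finset.sum_congr rfl fun c _ => ?_
        rw [Matrix.transpose_apply]
        ring

lemma trace_mul_transpose {n : ℕ} (A B : QOp n) : (A * Bᵀ).trace = (Aᵀ * B).trace := by
  rw [← Matrix.trace_transpose (A * Bᵀ), Matrix.transpose_mul, Matrix.transpose_transpose,
    Matrix.trace_mul_comm]

lemma key {n : ℕ} (U : QOp n) (u v : PauliLabel n) :
    star (maxEnt n) ⬝ᵥ
        (tensorOp (pauliStr u) (Uᴴ * pauliStr v * U)).mulVec (maxEnt n)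
      = pSign u * (pauliStr v * U * pauliStr u * Uᴴ).trace / 2 ^ n := by
  rw [maxEnt_inner, trace_mul_transpose, pauliStr_transpose, Matrix.smul_mul,
    Matrix.trace_smul, smul_eq_mul]
  congr 1
  simp only [Matrix.mul_assoc]
  rw [Matrix.trace_mul_comm]
  simp only [Matrix.mul_assoc]
  rw [Matrix.trace_mul_comm]
  simp only [Matrix.mul_assoc]

lemma spf_formula {n : ℕ} (U : QOp n) (w : PauliLabel (n + n)) :
    statePauliFun ((tensorOp (1 : QOp n) U).mulVec (maxEnt n)) w
      = pSign (fstLab w) *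
          (pauliStr (sndLab w) * U * pauliStr (fstLab w) * Uᴴ).trace / 2 ^ n := by
  unfold statePauliFun
  rw [Matrix.star_mulVec, Matrix.mulVec_mulVec, Matrix.dotProduct_mulVec,
    Matrix.vecMul_vecMul, ← Matrix.dotProduct_mulVec]
  have hM : (tensorOp (1 : QOp n) U)ᴴ * (pauliStr w * tensorOp (1 : QOp n) U)
      = tensorOp (pauliStr (fstLab w)) (Uᴴ * pauliStr (sndLab w) * U) := by
    rw [pauliStr_split w, tensorOp_conjTranspose, Matrix.conjTranspose_one,
      tensorOp_mul, tensorOp_mul, one_mul, Matrix.mul_one, Matrix.mul_assoc]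
  rw [hM, key]

lemma spf_cond {n : ℕ} (U : QOp n) (w : PauliLabel (n + n)) :
    (statePauliFun ((tensorOp (1 : QOp n) U).mulVec (maxEnt n)) w = 1 ∨
      statePauliFun ((tensorOp (1 : QOp n) U).mulVec (maxEnt n)) w = -1)
      ↔ (PauliFun U (sndLab w) (fstLab w) = 1 ∨ PauliFun U (sndLab w) (fstLab w) = -1) := by
  rw [spf_formula, mul_div_assoc]
  have hPF : (pauliStr (sndLab w) * U * pauliStr (fstLab w) * Uᴴ).trace / 2 ^ n
      = PauliFun U (sndLab w) (fstLab w) := rfl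
  rw [hPF]
  rcases pSign_one_or_neg_one (fstLab w) with h | h <;> rw [h]
  · rw [one_mul]
  · rw [neg_one_mul]
    constructor
    · rintro (h1 | h1)
      · exact Or.inr (neg_eq_iff_eq_neg.mp h1)
      · exact Or.inl (neg_inj.mp h1)
    · rintro (h1 | h1)
      · exact Or.inr (by rw [h1])
      · exact Or.inl (by rw [h1, neg_neg])

lemma sState_eq_sU {n : ℕ} (U : QOp n) :
    sState ((tensorOp (1 : QOp n) U).mulVec (maxEnt n)) = sU U := by
  unfold sState sU
  set G : PauliLabel (n + n) ≃ PauliLabel n × PauliLabel n :=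
    (splitFun (n := n) (m := n) (α := ZMod 2 × ZMod 2)).trans
      (Equiv.prodComm (PauliLabel n) (PauliLabel n)) with hG
  set S : Set (PauliLabel n × PauliLabel n) :=
    {p : PauliLabel n × PauliLabel n | PauliFun U p.1 p.2 = 1 ∨ PauliFun U p.1 p.2 = -1}
    with hS
  have hset : {w : PauliLabel (n + n) |
      statePauliFun ((tensorOp (1 : QOp n) U).mulVec (maxEnt n)) w = 1 ∨
        statePauliFun ((tensorOp (1 : QOp n) U).mulVec (maxEnt n)) w = -1} = G ⁻¹' S := by
    ext w
    exact spf_cond U w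
  have himg : G ⁻¹' S = G.symm '' S := by
    rw [Equiv.image_eq_preimage_symm, Equiv.symm_symm]
  rw [hset, himg, Set.ncard_image_of_injective _ G.symm.injective]

end
end Aux

theorem maxEnt_state_nullity_eq_unitary_nullity {n : ℕ} (U : QOp n)
    (hU : U ∈ Matrix.unitaryGroup (Fin n → Fin 2) ℂ) :
    (∀ u : PauliLabel n, ∃ γ : ℂ, (γ = 1 ∨ γ = -1) ∧ ∀ v : PauliLabel n,
      star (maxEnt n) ⬝ᵥ
          (tensorOp (pauliStr u) (Uᴴ * pauliStr v * U)).mulVec (maxEnt n)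
        = γ * (pauliStr v * U * pauliStr u * Uᴴ).trace / 2 ^ n) ∧
    sState ((tensorOp (1 : QOp n) U).mulVec (maxEnt n)) = sU U ∧
    stateNullity ((tensorOp (1 : QOp n) U).mulVec (maxEnt n)) = nullity U := by
  refine ⟨fun u => ⟨pSign u, pSign_one_or_neg_one u, fun v => key U u v⟩, sState_eq_sU U, ?_⟩
  unfold stateNullity nullity
  rw [sState_eq_sU U]
  push_cast
  ring
end
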